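/- Let γ > 0, λ > 0, a ∈ ℝ, and c > 0, and let f = c·𝟙_{[a,∞)}: ℝ → ℝ. Then λ ν_γ({(x,y) ∈ ℝ×ℝ : |f(x)−f(y)| > λ|x−y|^{1+γ}}) = (2/(γ+1))·c. -/

import Mathlib

open MeasureTheory Filter Set
open scoped ENNReal Topology

/-- The measure `ν_γ` on `ℝ × ℝ`: `ν_γ(A) = ∬_A |x - y|^(γ-1) dy dx`. -/
noncomputable def nuG (γ : ℝ) (A : Set (ℝ × ℝ)) : ℝ≥0∞ :=
  ∫⁻ p in A, ENNReal.ofReal (|p.1 - p.2| ^ (γ - 1))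

/-- The set `E_{γ,λ}(f,Ω) = {(x,y) ∈ Ω × Ω : |f(x) - f(y)| > λ |x - y|^(1+γ)}`. -/
def EG (γ lam : ℝ) (f : ℝ → ℝ) (Ω : Set ℝ) : Set (ℝ × ℝ) :=
  {p | p.1 ∈ Ω ∧ p.2 ∈ Ω ∧ lam * |p.1 - p.2| ^ (1 + γ) < |f p.1 - f p.2|}

/-- The functional `F_{γ,λ}(f,Ω) = λ ν_γ(E_{γ,λ}(f,Ω))`. -/
noncomputable def FG (γ lam : ℝ) (f : ℝ → ℝ) (Ω : Set ℝ) : ℝ≥0∞ :=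
  ENNReal.ofReal lam * nuG γ (EG γ lam f Ω)

lemma gmeas (γ : ℝ) : Measurable fun p : ℝ × ℝ => ENNReal.ofReal (|p.1 - p.2| ^ (γ - 1)) :=
  Measurable.ennreal_ofReal (Measurable.pow ((measurable_fst.sub measurable_snd).abs) measurable_const)

/-- Measure of the "lower" half. -/
lemma nuG_S1 (γ a r : ℝ) (hγ : 0 < γ) (hr : 0 < r) :
    nuG γ {p : ℝ × ℝ | a ≤ p.1 ∧ p.2 < a ∧ |p.1 - p.2| < r}
      = ENNReal.ofReal (r ^ (γ + 1) / (γ + 1)) := by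
  set g : ℝ × ℝ → ℝ≥0∞ := fun p => ENNReal.ofReal (|p.1 - p.2| ^ (γ - 1)) with hg
  set S1 : Set (ℝ × ℝ) := {p : ℝ × ℝ | a ≤ p.1 ∧ p.2 < a ∧ |p.1 - p.2| < r} with hS1def
  have hS1 : MeasurableSet S1 := by
    have : S1 = (Ici a ×ˢ Iio a) ∩ {p : ℝ × ℝ | |p.1 - p.2| < r} := by
      ext ⟨x, y⟩; simp [hS1def, Set.mem_prod, and_assoc]
    rw [this]
    exact (measurableSet_Ici.prod measurableSet_Iio).inter
      (measurableSet_lt ((measurable_fst.sub measurable_snd).abs) measurable_const)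
  rw [nuG, ← lintegral_indicator hS1, Measure.volume_eq_prod,
    lintegral_prod _ ((gmeas γ).indicator hS1).aemeasurable]
  have key : ∀ x : ℝ, (∫⁻ y, S1.indicator g (x, y)) =
      (Ico a (a + r)).indicator
        (fun x => ENNReal.ofReal ((r ^ γ - (x - a) ^ γ) / γ)) x := by
    intro x
    by_cases hx : a ≤ x
    · have hsec : (fun y => S1.indicator g (x, y)) =
          (Ioo (x - r) a).indicator (fun y => ENNReal.ofReal ((x - y) ^ (γ - 1))) := by
        funext y
        by_cases hy : y ∈ Ioo (x - r) a
        · rw [indicator_of_mem hy, indicator_of_mem]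
          · have hxy : 0 < x - y := by
              have := hy.2; simp only [mem_Ioo] at hy; linarith
            rw [hg]; simp only [abs_of_pos hxy]
          · refine ⟨hx, hy.2, ?_⟩
            have : 0 < x - y := by
              have := hy.2; simp only [mem_Ioo] at hy; linarith
            rw [abs_of_pos this]
            have := hy.1; linarith
        · rw [indicator_of_notMem hy, indicator_of_notMem]
          intro hmem
          obtain ⟨-, h2, h3⟩ := hmem
          have hxy : 0 < x - y := by linarith
          rw [abs_of_pos hxy] at h3
          exact hy ⟨by linarith, h2⟩
      rw [hsec, lintegral_indicator measurableSet_Ioo]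
      by_cases hxr : x < a + r
      · rw [indicator_of_mem (mem_Ico.mpr ⟨hx, hxr⟩)]
        have hxra : x - r < a := by linarith
        have hII : IntervalIntegrable (fun y => (x - y) ^ (γ - 1)) volume (x - r) a := by
          have h1 : IntervalIntegrable (fun u : ℝ => u ^ (γ - 1)) volume
              (x - a) (x - (x - r)) := intervalIntegral.intervalIntegrable_rpow' (by linarith)
          simpa using (h1.comp_sub_left x).symm
        have hIO : IntegrableOn (fun y => (x - y) ^ (γ - 1)) (Ioo (x - r) a) volume :=
          ((intervalIntegrable_iff_integrableOn_Ioc_of_le hxra.le).mp hII).mono_set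
            Ioo_subset_Ioc_self
        have hnn : 0 ≤ᵐ[volume.restrict (Ioo (x - r) a)] fun y => (x - y) ^ (γ - 1) := by
          filter_upwards [ae_restrict_mem measurableSet_Ioo] with y hy
          have : 0 < x - y := by
            simp only [mem_Ioo] at hy; linarith [hy.2]
          positivity
        rw [← ofReal_integral_eq_lintegral_ofReal hIO hnn]
        · congr 1
          have : (∫ y in Ioo (x - r) a, (x - y) ^ (γ - 1)) =
              ∫ y in (x - r)..a, (x - y) ^ (γ - 1) := by
            rw [intervalIntegral.integral_of_le hxra.le, integral_Ioc_eq_integral_Ioo]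
          rw [this, intervalIntegral.integral_comp_sub_left (fun u => u ^ (γ - 1)) x,
            integral_rpow (Or.inl (by linarith))]
          have h2 : γ - 1 + 1 = γ := by ring
          have h3 : x - (x - r) = r := by ring
          rw [h2, h3]
      · rw [indicator_of_notMem (by simp [mem_Ico]; intro _; linarith)]
        have : Ioo (x - r) a = ∅ := Ioo_eq_empty (by intro h; linarith)
        simp [this]
    · have h0 : (fun y => S1.indicator g (x, y)) = fun _ => 0 := by
        funext y
        exact indicator_of_notMem (fun hmem => hx hmem.1) g
      rw [h0, lintegral_zero, indicator_of_notMem (by simp [mem_Ico]; intro h; exact absurd h hx)]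
  simp_rw [← hg, key]
  rw [lintegral_indicator measurableSet_Ico,
    setLIntegral_congr (Ico_ae_eq_Ioc (a := a) (b := a + r))]
  have hII : IntervalIntegrable (fun x => (r ^ γ - (x - a) ^ γ) / γ) volume a (a + r) := by
    refine IntervalIntegrable.div_const ?_ γ
    refine (intervalIntegrable_const).sub ?_
    have h1 : IntervalIntegrable (fun u : ℝ => u ^ γ) volume (a - a) (a + r - a) :=
      intervalIntegral.intervalIntegrable_rpow' (by linarith)
    simpa [add_comm] using h1.comp_sub_right a
  have hIO : IntegrableOn (fun x => (r ^ γ - (x - a) ^ γ) / γ) (Ioc a (a + r)) volume :=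
    (intervalIntegrable_iff_integrableOn_Ioc_of_le (by linarith)).mp hII
  have hnn2 : 0 ≤ᵐ[volume.restrict (Ioc a (a + r))]
      fun x => (r ^ γ - (x - a) ^ γ) / γ := by
    filter_upwards [ae_restrict_mem measurableSet_Ioc] with x hx
    have h1 : (x - a) ^ γ ≤ r ^ γ := by
      apply Real.rpow_le_rpow (by linarith [hx.1]) (by linarith [hx.2]) hγ.le
    have : 0 ≤ r ^ γ - (x - a) ^ γ := by linarith
    positivity
  rw [← ofReal_integral_eq_lintegral_ofReal hIO hnn2]
  · congr 1
    rw [← intervalIntegral.integral_of_le (by linarith : a ≤ a + r),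
      intervalIntegral.integral_div, intervalIntegral.integral_sub intervalIntegrable_const
        (by simpa [add_comm] using (intervalIntegral.intervalIntegrable_rpow'
          (by linarith : (-1:ℝ) < γ) (a := a - a) (b := a + r - a)).comp_sub_right a),
      intervalIntegral.integral_const, intervalIntegral.integral_comp_sub_right (fun u => u ^ γ) a]
    simp only [add_sub_cancel_left, sub_self]
    rw [integral_rpow (Or.inl (by linarith)),
      Real.zero_rpow (by positivity : γ + 1 ≠ 0)]
    have hrγ : r ^ (γ + 1) = r ^ γ * r := Real.rpow_add_one hr.ne' γ
    rw [smul_eq_mul]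
    field_simp
    rw [hrγ]; ring

/-- For `γ, λ > 0`, `a ∈ ℝ`, `c > 0`, and `f = c·𝟙_{[a,∞)}`, one has
`λ ν_γ({(x,y) : |f(x)-f(y)| > λ|x-y|^(1+γ)}) = (2/(γ+1))·c`. -/
theorem stmt7 (γ lam a c : ℝ) (hγ : 0 < γ) (hlam : 0 < lam) (hc : 0 < c) :
    ENNReal.ofReal lam *
      nuG γ (EG γ lam (Set.indicator (Set.Ici a) fun _ => c) Set.univ)
      = ENNReal.ofReal (2 / (γ + 1) * c) := by
  set r : ℝ := (c / lam) ^ (1 + γ)⁻¹ with hrdef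
  have hr : 0 < r := Real.rpow_pos_of_pos (by positivity) _
  set S1 : Set (ℝ × ℝ) := {p : ℝ × ℝ | a ≤ p.1 ∧ p.2 < a ∧ |p.1 - p.2| < r} with hS1def
  set S2 : Set (ℝ × ℝ) := {p : ℝ × ℝ | p.1 < a ∧ a ≤ p.2 ∧ |p.1 - p.2| < r} with hS2def
  -- the set identity
  have habs : ∀ t : ℝ, 0 ≤ t → (lam * t ^ (1 + γ) < c ↔ t < r) := by
    intro t ht
    rw [hrdef, Real.lt_rpow_inv_iff_of_pos ht (by positivity) (by linarith),
      lt_div_iff₀ hlam, mul_comm]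
  have hE : EG γ lam (Set.indicator (Set.Ici a) fun _ => c) Set.univ = S1 ∪ S2 := by
    ext ⟨x, y⟩
    simp only [EG, Set.mem_setOf_eq, Set.mem_univ, true_and, hS1def, hS2def, Set.mem_union]
    by_cases hx : a ≤ x <;> by_cases hy : a ≤ y
    · rw [indicator_of_mem (mem_Ici.mpr hx), indicator_of_mem (mem_Ici.mpr hy)]
      simp only [sub_self, abs_zero]
      constructor
      · intro h; exact absurd h (not_lt.mpr (by positivity))
      · rintro (⟨-, h, -⟩ | ⟨h, -, -⟩) <;> [exact absurd hy (not_le.mpr h);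
          exact absurd hx (not_le.mpr h)]
    · rw [indicator_of_mem (mem_Ici.mpr hx), indicator_of_notMem (fun h => hy (mem_Ici.mp h))]
      rw [sub_zero, abs_of_pos hc]
      rw [habs _ (abs_nonneg _)]
      constructor
      · intro h; exact Or.inl ⟨hx, not_le.mp hy, h⟩
      · rintro (⟨-, -, h⟩ | ⟨h, -, -⟩); · exact h
        · exact absurd hx (not_le.mpr h)
    · rw [indicator_of_notMem (fun h => hx (mem_Ici.mp h)), indicator_of_mem (mem_Ici.mpr hy)]
      rw [zero_sub, abs_neg, abs_of_pos hc, habs _ (abs_nonneg _)]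
      constructor
      · intro h; exact Or.inr ⟨not_le.mp hx, hy, h⟩
      · rintro (⟨h, -, -⟩ | ⟨-, -, h⟩); · exact absurd hy (not_le.mpr (by linarith))
        · exact h
    · rw [indicator_of_notMem (fun h => hx (mem_Ici.mp h)), indicator_of_notMem (fun h => hy (mem_Ici.mp h))]
      simp only [sub_self, abs_zero]
      constructor
      · intro h; exact absurd h (not_lt.mpr (by positivity))
      · rintro (⟨h, -, -⟩ | ⟨-, h, -⟩) <;> [exact absurd h hx; exact absurd h hy]
  -- measurability
  have hS1m : MeasurableSet S1 := by
    have : S1 = (Ici a ×ˢ Iio a) ∩ {p : ℝ × ℝ | |p.1 - p.2| < r} := by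
      ext ⟨x, y⟩; simp [hS1def, Set.mem_prod, and_assoc]
    rw [this]
    exact (measurableSet_Ici.prod measurableSet_Iio).inter
      (measurableSet_lt ((measurable_fst.sub measurable_snd).abs) measurable_const)
  have hS2m : MeasurableSet S2 := by
    have : S2 = (Iio a ×ˢ Ici a) ∩ {p : ℝ × ℝ | |p.1 - p.2| < r} := by
      ext ⟨x, y⟩; simp [hS2def, Set.mem_prod, and_assoc]
    rw [this]
    exact (measurableSet_Iio.prod measurableSet_Ici).inter
      (measurableSet_lt ((measurable_fst.sub measurable_snd).abs) measurable_const)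
  have hdisj : Disjoint S1 S2 := by
    rw [Set.disjoint_left]
    rintro ⟨x, y⟩ ⟨h1, -, -⟩ ⟨h2, -, -⟩
    exact absurd h1 (not_le.mpr h2)
  -- symmetry
  have hswap : nuG γ S2 = nuG γ S1 := by
    have hpre : Prod.swap ⁻¹' S2 = S1 := by
      ext ⟨x, y⟩
      simp only [mem_preimage, Prod.swap_prod_mk, hS2def, hS1def, mem_setOf_eq, abs_sub_comm y x]
      tauto
    rw [nuG, nuG, ← lintegral_indicator hS2m, ← lintegral_indicator hS1m, Measure.volume_eq_prod]
    rw [← (Measure.measurePreserving_swap (μ := (volume : Measure ℝ)) (ν := (volume : Measure ℝ))).lintegral_comp ((gmeas γ).indicator hS2m)]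
    congr 1
    funext p
    rw [show (S2.indicator (fun p : ℝ × ℝ => ENNReal.ofReal (|p.1 - p.2| ^ (γ - 1))))
          (Prod.swap p) =
        (Prod.swap ⁻¹' S2).indicator
          ((fun p : ℝ × ℝ => ENNReal.ofReal (|p.1 - p.2| ^ (γ - 1))) ∘ Prod.swap) p from rfl,
      hpre]
    by_cases hp : p ∈ S1
    · rw [indicator_of_mem hp, indicator_of_mem hp]
      simp [Function.comp, abs_sub_comm p.2 p.1]
    · rw [indicator_of_notMem hp, indicator_of_notMem hp]
  -- put together
  rw [hE, nuG, lintegral_union hS2m hdisj, ← nuG, ← nuG, hswap, nuG_S1 γ a r hγ hr]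
  have hrval : r ^ (γ + 1) = c / lam := by
    rw [hrdef, add_comm γ 1]
    exact Real.rpow_inv_rpow (by positivity) (by positivity)
  rw [← two_mul, ← ENNReal.ofReal_ofNat, ← ENNReal.ofReal_mul (by norm_num),
    ← ENNReal.ofReal_mul hlam.le, hrval]
  congr 1
  field_simp
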